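/- For every integer n ≥ 2, the number of compositions of n all of whose parts are odd equals the number of compositions of n+1 all of whose parts are at least 2. -/

import Mathlib

/-- Lists of odd parts summing to `n`. -/
def OddL (n : ℕ) := {l : List ℕ // l.sum = n ∧ ∀ p ∈ l, Odd p}

/-- Lists of parts `≥ 2` summing to `n`. -/
def GeL (n : ℕ) := {l : List ℕ // l.sum = n ∧ ∀ p ∈ l, 2 ≤ p}

def oddEquiv (n : ℕ) : {c : Composition n // ∀ p ∈ c.blocks, Odd p} ≃ OddL n where
  toFun c := ⟨c.1.blocks, c.1.blocks_sum, c.2⟩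
  invFun l := ⟨⟨l.1, fun hi => (l.2.2 _ hi).pos, l.2.1⟩, l.2.2⟩
  left_inv c := by cases c with | mk c h => cases c; rfl
  right_inv l := rfl

def geEquiv (n : ℕ) : {c : Composition n // ∀ p ∈ c.blocks, 2 ≤ p} ≃ GeL n where
  toFun c := ⟨c.1.blocks, c.1.blocks_sum, c.2⟩
  invFun l := ⟨⟨l.1, fun hi => by have := l.2.2 _ hi; omega, l.2.1⟩, l.2.2⟩
  left_inv c := by cases c with | mk c h => cases c; rfl
  right_inv l := rfl

instance (n : ℕ) : Finite (OddL n) := Finite.of_equiv _ (oddEquiv n)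
instance (n : ℕ) : Finite (GeL n) := Finite.of_equiv _ (geEquiv n)

def oddSplitTo (n : ℕ) : OddL (n+3) → OddL (n+2) ⊕ OddL (n+1)
  | ⟨[], h, _⟩ => absurd h (by simp)
  | ⟨a :: t, h, h2⟩ =>
    if ha : a = 1 then
      Sum.inl ⟨t, by subst ha; simp only [List.sum_cons] at h; omega,
        fun p hp => h2 p (List.mem_cons_of_mem _ hp)⟩
    else
      Sum.inr ⟨(a - 2) :: t, by
          obtain ⟨k, hk⟩ := h2 a (by simp)
          simp only [List.sum_cons] at h ⊢
          omega,
        by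
          intro p hp
          rcases List.mem_cons.mp hp with h' | hp
          · subst h'
            obtain ⟨k, hk⟩ := h2 a (by simp)
            exact ⟨k - 1, by omega⟩
          · exact h2 p (List.mem_cons_of_mem _ hp)⟩

def oddSplitInv (n : ℕ) : OddL (n+2) ⊕ OddL (n+1) → OddL (n+3)
  | Sum.inl ⟨t, ht, h2⟩ => ⟨1 :: t, by simp only [List.sum_cons, ht]; omega, by
      intro p hp
      rcases List.mem_cons.mp hp with h' | hp
      · subst h'; exact odd_one
      · exact h2 p hp⟩
  | Sum.inr ⟨[], h, _⟩ => absurd h (by simp)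
  | Sum.inr ⟨a :: t, h, h2⟩ => ⟨(a + 2) :: t, by simp only [List.sum_cons] at h ⊢; omega, by
      intro p hp
      rcases List.mem_cons.mp hp with h' | hp
      · subst h'
        obtain ⟨k, hk⟩ := h2 a (by simp)
        exact ⟨k + 1, by omega⟩
      · exact h2 p (List.mem_cons_of_mem _ hp)⟩

def oddSplit (n : ℕ) : OddL (n+3) ≃ OddL (n+2) ⊕ OddL (n+1) where
  toFun := oddSplitTo n
  invFun := oddSplitInv n
  left_inv := by
    rintro ⟨l, h, h2⟩
    cases l with
    | nil => simp at h
    | cons a t =>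
      by_cases ha : a = 1
      · subst ha
        simp [oddSplitTo, oddSplitInv]; split <;> rename_i heq <;> cases heq <;> rfl
      · obtain ⟨b, rfl⟩ : ∃ b, a = b + 2 := by
          obtain ⟨k, hk⟩ := h2 a (by simp)
          exact ⟨a - 2, by omega⟩
        simp [oddSplitTo, oddSplitInv]; split <;> rename_i heq <;> cases heq <;> rfl
  right_inv := by
    rintro (⟨t, ht, h2⟩ | ⟨l, h, h2⟩)
    · simp [oddSplitTo, oddSplitInv]; split <;> rename_i heq <;> cases heq <;> rfl
    · cases l with
      | nil => simp at h
      | cons a t => simp [oddSplitTo, oddSplitInv]; split <;> rename_i heq <;> cases heq <;> rfl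

def geSplitTo (n : ℕ) : GeL (n+2) → GeL n ⊕ GeL (n+1)
  | ⟨[], h, _⟩ => absurd h (by simp)
  | ⟨a :: t, h, h2⟩ =>
    if ha : a = 2 then
      Sum.inl ⟨t, by subst ha; simp only [List.sum_cons] at h; omega,
        fun p hp => h2 p (List.mem_cons_of_mem _ hp)⟩
    else
      Sum.inr ⟨(a - 1) :: t, by
          have := h2 a (by simp)
          simp only [List.sum_cons] at h ⊢
          omega,
        by
          intro p hp
          rcases List.mem_cons.mp hp with h' | hp
          · subst h'
            have := h2 a (by simp)
            omega
          · exact h2 p (List.mem_cons_of_mem _ hp)⟩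

def geSplitInv (n : ℕ) : GeL n ⊕ GeL (n+1) → GeL (n+2)
  | Sum.inl ⟨t, ht, h2⟩ => ⟨2 :: t, by simp only [List.sum_cons, ht]; omega, by
      intro p hp
      rcases List.mem_cons.mp hp with h' | hp
      · subst h'; exact le_refl 2
      · exact h2 p hp⟩
  | Sum.inr ⟨[], h, _⟩ => absurd h (by simp)
  | Sum.inr ⟨a :: t, h, h2⟩ => ⟨(a + 1) :: t, by simp only [List.sum_cons] at h ⊢; omega, by
      intro p hp
      rcases List.mem_cons.mp hp with h' | hp
      · subst h'
        have := h2 a (by simp)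
        omega
      · exact h2 p (List.mem_cons_of_mem _ hp)⟩

def geSplit (n : ℕ) : GeL (n+2) ≃ GeL n ⊕ GeL (n+1) where
  toFun := geSplitTo n
  invFun := geSplitInv n
  left_inv := by
    rintro ⟨l, h, h2⟩
    cases l with
    | nil => simp at h
    | cons a t =>
      by_cases ha : a = 2
      · subst ha
        simp [geSplitTo, geSplitInv]; split <;> rename_i heq <;> cases heq <;> rfl
      · obtain ⟨b, rfl⟩ : ∃ b, a = b + 3 := by
          have := h2 a (by simp)
          exact ⟨a - 3, by omega⟩
        simp [geSplitTo, geSplitInv]; split <;> rename_i heq <;> cases heq <;> rfl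
  right_inv := by
    rintro (⟨t, ht, h2⟩ | ⟨l, h, h2⟩)
    · simp [geSplitTo, geSplitInv]; split <;> rename_i heq <;> cases heq <;> rfl
    · cases l with
      | nil => simp at h
      | cons a t =>
        obtain ⟨b, rfl⟩ : ∃ b, a = b + 2 := by
          have := h2 a (by simp)
          exact ⟨a - 2, by omega⟩
        simp [geSplitTo, geSplitInv]; split <;> rename_i heq <;> cases heq <;> rfl

lemma odd_nil {t : List ℕ} (h2 : ∀ p ∈ t, Odd p) (h : t.sum = 0) : t = [] := by
  cases t with
  | nil => rfl
  | cons b t' =>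
    have := (h2 b (by simp)).pos
    simp only [List.sum_cons] at h
    omega

lemma ge_nil {t : List ℕ} (h2 : ∀ p ∈ t, 2 ≤ p) (h : t.sum = 0) : t = [] := by
  cases t with
  | nil => rfl
  | cons b t' =>
    have := h2 b (by simp)
    simp only [List.sum_cons] at h
    omega

instance : Unique (OddL 1) where
  default := ⟨[1], by simp, by simp⟩
  uniq := by
    rintro ⟨l, h, h2⟩
    apply Subtype.ext
    cases l with
    | nil => simp at h
    | cons a t =>
      obtain ⟨k, hk⟩ := h2 a (by simp)
      simp only [List.sum_cons] at h
      have ha : a = 1 := by omega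
      have ht : t = [] := odd_nil (fun p hp => h2 p (List.mem_cons_of_mem _ hp)) (by omega)
      subst ha; subst ht; rfl

instance : Unique (OddL 2) where
  default := ⟨[1, 1], by simp, by simp⟩
  uniq := by
    rintro ⟨l, h, h2⟩
    apply Subtype.ext
    cases l with
    | nil => simp at h
    | cons a t =>
      obtain ⟨k, hk⟩ := h2 a (by simp)
      simp only [List.sum_cons] at h
      have ha : a = 1 := by omega
      cases t with
      | nil => subst ha; simp at h
      | cons b t' =>
        obtain ⟨k', hk'⟩ := h2 b (by simp)
        simp only [List.sum_cons] at h
        have hb : b = 1 := by omega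
        have ht' : t' = [] :=
          odd_nil (fun p hp => h2 p (List.mem_cons_of_mem _ (List.mem_cons_of_mem _ hp)))
            (by omega)
        subst ha; subst hb; subst ht'; rfl

instance : Unique (GeL 2) where
  default := ⟨[2], by simp, by simp⟩
  uniq := by
    rintro ⟨l, h, h2⟩
    apply Subtype.ext
    cases l with
    | nil => simp at h
    | cons a t =>
      have := h2 a (by simp)
      simp only [List.sum_cons] at h
      have hts : t.sum = 0 := by
        cases t with
        | nil => simp
        | cons b t' =>
          have := h2 b (by simp)
          simp only [List.sum_cons] at h ⊢
          omega
      have ha : a = 2 := by omega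
      have ht : t = [] := ge_nil (fun p hp => h2 p (List.mem_cons_of_mem _ hp)) hts
      subst ha; subst ht; rfl

instance : Unique (GeL 3) where
  default := ⟨[3], by simp, by simp⟩
  uniq := by
    rintro ⟨l, h, h2⟩
    apply Subtype.ext
    cases l with
    | nil => simp at h
    | cons a t =>
      have := h2 a (by simp)
      simp only [List.sum_cons] at h
      have hts : t.sum = 0 := by
        cases t with
        | nil => simp
        | cons b t' =>
          have := h2 b (by simp)
          simp only [List.sum_cons] at h ⊢
          omega
      have ha : a = 3 := by omega
      have ht : t = [] := ge_nil (fun p hp => h2 p (List.mem_cons_of_mem _ hp)) hts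
      subst ha; subst ht; rfl

theorem key : ∀ n : ℕ, Nat.card (OddL (n+1)) = Nat.card (GeL (n+2))
  | 0 => by
    show Nat.card (OddL 1) = Nat.card (GeL 2)
    rw [Nat.card_unique, Nat.card_unique]
  | 1 => by
    show Nat.card (OddL 2) = Nat.card (GeL 3)
    rw [Nat.card_unique, Nat.card_unique]
  | (n+2) => by
    show Nat.card (OddL (n+3)) = Nat.card (GeL (n+4))
    have h1 : Nat.card (OddL (n+1)) = Nat.card (GeL (n+2)) := key n
    have h2 : Nat.card (OddL (n+2)) = Nat.card (GeL (n+3)) := key (n+1)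
    have e1 : Nat.card (OddL (n+3)) = Nat.card (OddL (n+2)) + Nat.card (OddL (n+1)) := by
      rw [Nat.card_congr (oddSplit n), Nat.card_sum]
    have e2 : Nat.card (GeL (n+4)) = Nat.card (GeL (n+2)) + Nat.card (GeL (n+3)) := by
      rw [Nat.card_congr (geSplit (n+2)), Nat.card_sum]
    omega

/-- For n ≥ 2, the number of compositions of n with all parts odd
equals the number of compositions of n+1 with all parts at least 2. -/
theorem card_odd_eq_card_ge_two_succ (n : ℕ) (hn : 2 ≤ n) :
    Nat.card {c : Composition n // ∀ p ∈ c.blocks, Odd p} =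
      Nat.card {c : Composition (n + 1) // ∀ p ∈ c.blocks, 2 ≤ p} := by
  obtain ⟨m, rfl⟩ : ∃ m, n = m + 1 := ⟨n - 1, by omega⟩
  rw [Nat.card_congr (oddEquiv (m+1)), Nat.card_congr (geEquiv (m+1+1))]
  exact key m
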